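/- Fix N ≥ 1 and r ∈ ℝ. Define the N×N matrix H̃ by H̃_{ij} = (−1)^N (ψ_{i+j−N}(2r²) − ψ_{i+j−N+1}(2r²)) where ψ_n(x) = e^{−x/2}L_n(x) for n ≥ 0 and ψ_n ≡ 0 for n < 0. Define L_{jk} = ∫_{2r²}^∞ ψ_j(x)ψ_k(x) dx. Then H̃² = L, i.e. for all j,k ∈ {0,…,N−1}, ∑_{n=0}^{N−1} H̃_{jn} H̃_{nk} = ∫_{2r²}^∞ ψ_j(x)ψ_k(x) dx. -/

import Mathlib

open MeasureTheory

/-- The `k`-th (normalized) Laguerre polynomial. -/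
noncomputable def Lag (k : ℕ) (x : ℝ) : ℝ :=
  ∑ l ∈ Finset.range (k + 1), (k.choose l : ℝ) * (-1) ^ l / (Nat.factorial l) * x ^ l

/-- The Laguerre function `ψ_n(x) = e^{-x/2} L_n(x)` for `n ≥ 0`,
extended by `ψ_n ≡ 0` for `n < 0`. -/
noncomputable def psiZ (n : ℤ) (x : ℝ) : ℝ :=
  if 0 ≤ n then Real.exp (-x / 2) * Lag n.toNat x else 0

/-- The Laguerre function with natural index. -/
noncomputable def psiL (n : ℕ) (x : ℝ) : ℝ := Real.exp (-x / 2) * Lag n x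

/-- The matrix `H̃`, with `H̃_{ij} = (-1)^N (ψ_{i+j-N}(2r²) - ψ_{i+j-N+1}(2r²))`. -/
noncomputable def Ht (N : ℕ) (r : ℝ) : Matrix (Fin N) (Fin N) ℝ :=
  fun i j => (-1) ^ N *
    (psiZ ((i : ℤ) + (j : ℤ) - (N : ℤ)) (2 * r ^ 2) -
     psiZ ((i : ℤ) + (j : ℤ) - (N : ℤ) + 1) (2 * r ^ 2))

/-- The matrix `Q`: `-2r` on the diagonal, `-4r` below it, `0` above it. -/
noncomputable def Qm (N : ℕ) (r : ℝ) : Matrix (Fin N) (Fin N) ℝ :=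
  fun i j => if (i : ℕ) = (j : ℕ) then -2 * r
    else if (j : ℕ) < (i : ℕ) then -4 * r else 0

/-- The constant vector `u` with all entries `(-1)^{N-1}`. -/
noncomputable def uVec (N : ℕ) : Fin N → ℝ := fun _ => (-1) ^ (N - 1)

/-- The alternating vector `v` with entries `v_i = 2(-1)^i`. -/
noncomputable def vVec (N : ℕ) : Fin N → ℝ := fun i => 2 * (-1) ^ (i : ℕ)

/-- derivative of Lag -/
noncomputable def LagD (k : ℕ) (x : ℝ) : ℝ :=
  ∑ l ∈ Finset.range (k + 1),
    (k.choose l : ℝ) * (-1) ^ l / (Nat.factorial l) * ((l : ℝ) * x ^ (l - 1))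

lemma hasDerivAt_Lag (k : ℕ) (x : ℝ) : HasDerivAt (fun y => Lag k y) (LagD k x) x := by
  unfold Lag LagD
  exact HasDerivAt.fun_sum fun l _ => (hasDerivAt_pow l x).const_mul _

lemma LagD_zero (x : ℝ) : LagD 0 x = 0 := by simp [LagD]

lemma LagD_succ (n : ℕ) (x : ℝ) : LagD (n + 1) x = LagD n x - Lag n x := by
  unfold LagD Lag
  rw [Finset.sum_range_succ'
    (fun l => ((n+1).choose l : ℝ) * (-1) ^ l / (Nat.factorial l) * ((l:ℝ) * x ^ (l-1)))]
  rw [Finset.sum_range_succ'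
    (fun l => (n.choose l : ℝ) * (-1) ^ l / (Nat.factorial l) * ((l:ℝ) * x ^ (l-1)))]
  have hB : ∑ m ∈ Finset.range (n+1),
      (n.choose (m+1) : ℝ) * (-1) ^ (m+1) / (Nat.factorial (m+1)) * ((m+1 : ℕ) * x ^ (m+1-1))
      = ∑ m ∈ Finset.range n,
      (n.choose (m+1) : ℝ) * (-1) ^ (m+1) / (Nat.factorial (m+1)) * ((m+1 : ℕ) * x ^ (m+1-1)) := by
    rw [Finset.sum_range_succ, Nat.choose_succ_self]
    simp
  rw [← hB]
  simp only [Nat.cast_zero, zero_mul, mul_zero, add_zero]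
  rw [← Finset.sum_sub_distrib]
  apply Finset.sum_congr rfl
  intro m _
  simp only [Nat.add_sub_cancel]
  rw [Nat.choose_succ_succ]
  have h1 : ((Nat.factorial m : ℝ)) ≠ 0 := Nat.cast_ne_zero.mpr (Nat.factorial_ne_zero m)
  have h2 : ((m : ℝ) + 1) ≠ 0 := by positivity
  push_cast [Nat.factorial_succ]
  field_simp
  ring

lemma hasDerivAt_psiL (n : ℕ) (x : ℝ) :
    HasDerivAt (fun t => psiL n t)
      (-(1/2) * psiL n x + Real.exp (-x/2) * LagD n x) x := by
  have h1 : HasDerivAt (fun t : ℝ => -t/2) (-(1/2)) x := by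
    have := ((hasDerivAt_id x).neg.div_const 2); norm_num at this ⊢; exact this
  have he : HasDerivAt (fun t : ℝ => Real.exp (-t/2)) (Real.exp (-x/2) * (-(1/2))) x :=
    by have := (Real.hasDerivAt_exp (-x/2)).comp x h1; exact this
  have h := he.fun_mul (hasDerivAt_Lag n x)
  unfold psiL
  refine h.congr_deriv ?_
  ring

lemma hasDerivAt_phiL (n : ℕ) (x : ℝ) :
    HasDerivAt (fun t => psiL n t - psiL (n+1) t)
      (-(1/2) * (psiL n x - psiL (n+1) x) + psiL n x) x := by
  have h := (hasDerivAt_psiL n x).sub (hasDerivAt_psiL (n+1) x)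
  have key : (-(1/2) * psiL n x + Real.exp (-x/2) * LagD n x) -
      (-(1/2) * psiL (n+1) x + Real.exp (-x/2) * LagD (n+1) x)
      = -(1/2) * (psiL n x - psiL (n+1) x) + psiL n x := by
    rw [LagD_succ]; unfold psiL; ring
  rwa [key] at h

lemma psiZ_natCast (n : ℕ) (x : ℝ) : psiZ (n : ℤ) x = psiL n x := by
  simp [psiZ, psiL]

lemma psiZ_zero (x : ℝ) : psiZ 0 x = psiL 0 x := by
  simp [psiZ, psiL]

lemma psiZ_neg {a : ℤ} (h : a < 0) (x : ℝ) : psiZ a x = 0 := by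
  simp [psiZ, not_le.mpr h]

lemma hasDerivAt_phiZ (a : ℤ) (x : ℝ) :
    HasDerivAt (fun t => psiZ a t - psiZ (a+1) t)
      (-(1/2) * (psiZ a x - psiZ (a+1) x) + psiZ a x) x := by
  rcases lt_trichotomy a (-1) with h | h | h
  · have h1 : a < 0 := by omega
    have h2 : a + 1 < 0 := by omega
    have hfun : (fun t => psiZ a t - psiZ (a+1) t) = fun _ : ℝ => (0:ℝ) := by
      funext t; rw [psiZ_neg h1, psiZ_neg h2]; ring
    rw [hfun, psiZ_neg h1 x, psiZ_neg h2 x]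
    simpa using hasDerivAt_const x (0:ℝ)
  · subst h
    have hfun : (fun t => psiZ (-1) t - psiZ ((-1:ℤ)+1) t) = fun t : ℝ => -(psiL 0 t) := by
      funext t
      rw [psiZ_neg (by norm_num) t, show ((-1:ℤ)+1) = 0 from by norm_num, psiZ_zero]
      ring
    rw [hfun, psiZ_neg (by norm_num) x, show ((-1:ℤ)+1) = 0 from by norm_num, psiZ_zero]
    have h := (hasDerivAt_psiL 0 x).fun_neg
    refine h.congr_deriv ?_
    rw [LagD_zero]; ring
  · obtain ⟨n, rfl⟩ : ∃ n : ℕ, a = (n : ℤ) := ⟨a.toNat, by omega⟩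
    have h := hasDerivAt_phiL n x
    have e1 : ((n:ℤ)+1) = ((n+1 : ℕ) : ℤ) := by push_cast; ring
    simp only [e1, psiZ_natCast]
    exact h

lemma hasDerivAt_phiphi (a b : ℤ) (x : ℝ) :
    HasDerivAt (fun t => (psiZ a t - psiZ (a+1) t) * (psiZ b t - psiZ (b+1) t))
      (psiZ a x * psiZ b x - psiZ (a+1) x * psiZ (b+1) x) x := by
  have h := (hasDerivAt_phiZ a x).fun_mul (hasDerivAt_phiZ b x)
  refine h.congr_deriv ?_
  ring

lemma integrableOn_monomial_exp (p : ℕ) {t : ℝ} (ht : 0 ≤ t) :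
    IntegrableOn (fun x => x ^ p * Real.exp (-x)) (Set.Ioi t) := by
  have h := Real.GammaIntegral_convergent (s := (p:ℝ) + 1) (by positivity)
  have h2 : IntegrableOn (fun x : ℝ => x ^ p * Real.exp (-x)) (Set.Ioi 0) := by
    apply h.congr_fun ?_ measurableSet_Ioi
    intro x hx
    have he : ((p:ℝ) + 1 - 1) = (p:ℝ) := by ring
    simp only [he, Real.rpow_natCast]
    ring
  exact h2.mono_set (Set.Ioi_subset_Ioi ht)

lemma integrableOn_psiL_mul {t : ℝ} (ht : 0 ≤ t) (n m : ℕ) :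
    IntegrableOn (fun x => psiL n x * psiL m x) (Set.Ioi t) := by
  have hfun : (fun x => psiL n x * psiL m x) = fun x =>
      ∑ p ∈ Finset.range (n+1), ∑ q ∈ Finset.range (m+1),
        ((n.choose p : ℝ) * (-1)^p / (Nat.factorial p)) *
          ((m.choose q : ℝ) * (-1)^q / (Nat.factorial q)) *
          (x ^ (p+q) * Real.exp (-x)) := by
    funext x
    unfold psiL Lag
    rw [show Real.exp (-x/2) * (∑ l ∈ Finset.range (n + 1),
          (n.choose l : ℝ) * (-1) ^ l / (Nat.factorial l) * x ^ l) *
        (Real.exp (-x/2) * (∑ l ∈ Finset.range (m + 1),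
          (m.choose l : ℝ) * (-1) ^ l / (Nat.factorial l) * x ^ l))
        = (Real.exp (-x/2) * Real.exp (-x/2)) *
          ((∑ l ∈ Finset.range (n + 1), (n.choose l : ℝ) * (-1) ^ l / (Nat.factorial l) * x ^ l) *
           (∑ l ∈ Finset.range (m + 1), (m.choose l : ℝ) * (-1) ^ l / (Nat.factorial l) * x ^ l))
        from by ring,
      ← Real.exp_add, show -x/2 + -x/2 = -x from by ring, Finset.sum_mul_sum,
      Finset.mul_sum]
    apply Finset.sum_congr rfl
    intro p _
    rw [Finset.mul_sum]
    apply Finset.sum_congr rfl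
    intro q _
    rw [pow_add]
    ring
  rw [hfun]
  apply MeasureTheory.integrable_finset_sum
  intro p _
  apply MeasureTheory.integrable_finset_sum
  intro q _
  exact (integrableOn_monomial_exp (p+q) ht).const_mul _

lemma tendsto_pow_exp_half (l : ℕ) :
    Filter.Tendsto (fun t : ℝ => t ^ l * Real.exp (-t/2)) Filter.atTop (nhds 0) := by
  have h := (Real.tendsto_pow_mul_exp_neg_atTop_nhds_zero l).comp
    ((Filter.tendsto_id (α := ℝ)).atTop_div_const two_pos)
  have h2 := h.const_mul ((2:ℝ)^l)
  rw [mul_zero] at h2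
  apply h2.congr
  intro t
  simp only [Function.comp_apply, id]
  rw [div_pow, neg_div]
  field_simp

lemma tendsto_psiL (n : ℕ) :
    Filter.Tendsto (fun t => psiL n t) Filter.atTop (nhds 0) := by
  have hfun : (fun t => psiL n t) = fun t =>
      ∑ l ∈ Finset.range (n+1),
        ((n.choose l : ℝ) * (-1)^l / (Nat.factorial l)) * (t ^ l * Real.exp (-t/2)) := by
    funext t
    unfold psiL Lag
    rw [Finset.mul_sum]
    apply Finset.sum_congr rfl
    intro l _
    ring
  rw [hfun]
  have h := tendsto_finset_sum (Finset.range (n+1)) (fun l (_ : l ∈ Finset.range (n+1)) =>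
    ((tendsto_pow_exp_half l).const_mul ((n.choose l : ℝ) * (-1)^l / (Nat.factorial l))))
  simpa using h

lemma tendsto_psiZ (a : ℤ) :
    Filter.Tendsto (fun t => psiZ a t) Filter.atTop (nhds 0) := by
  rcases le_or_gt 0 a with h | h
  · obtain ⟨n, rfl⟩ : ∃ n : ℕ, a = (n : ℤ) := ⟨a.toNat, by omega⟩
    simp only [psiZ_natCast]
    exact tendsto_psiL n
  · simp only [psiZ_neg h]
    exact tendsto_const_nhds

theorem stmt9 (N : ℕ) (hN : 1 ≤ N) (r : ℝ) (j k : Fin N) :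
    ∑ n : Fin N, Ht N r j n * Ht N r n k
      = ∫ x in Set.Ioi (2 * r ^ 2), psiL (j : ℕ) x * psiL (k : ℕ) x := by
  set t0 : ℝ := 2 * r ^ 2 with ht0def
  have ht0 : 0 ≤ t0 := by positivity
  set F : ℝ → ℝ := fun t => ∑ n : Fin N,
    (psiZ ((j:ℤ) + (n:ℤ) - (N:ℤ)) t - psiZ ((j:ℤ) + (n:ℤ) - (N:ℤ) + 1) t) *
    (psiZ ((n:ℤ) + (k:ℤ) - (N:ℤ)) t - psiZ ((n:ℤ) + (k:ℤ) - (N:ℤ) + 1) t) with hF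
  have hLHS : ∑ n : Fin N, Ht N r j n * Ht N r n k = F t0 := by
    rw [hF]
    apply Finset.sum_congr rfl
    intro n _
    unfold Ht
    have hsq : ((-1:ℝ))^N * (-1)^N = 1 := by
      rw [← pow_add]
      exact Even.neg_one_pow ⟨N, rfl⟩
    rw [mul_mul_mul_comm, hsq, one_mul]
  have hjN : ((j:ℕ) : ℤ) < (N:ℤ) := by exact_mod_cast j.isLt
  have hFderiv : ∀ x : ℝ, HasDerivAt F (-(psiL (j:ℕ) x * psiL (k:ℕ) x)) x := by
    intro x
    have h := HasDerivAt.fun_sum (fun (n : Fin N) (_ : n ∈ Finset.univ) =>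
      hasDerivAt_phiphi ((j:ℤ) + (n:ℤ) - (N:ℤ)) ((n:ℤ) + (k:ℤ) - (N:ℤ)) x)
    set G : ℕ → ℝ := fun m =>
      psiZ ((j:ℤ) + (m:ℤ) - (N:ℤ)) x * psiZ ((k:ℤ) + (m:ℤ) - (N:ℤ)) x with hGdef
    have hterm : ∀ n : ℕ,
        psiZ ((j:ℤ)+(n:ℤ)-(N:ℤ)) x * psiZ ((n:ℤ)+(k:ℤ)-(N:ℤ)) x -
        psiZ ((j:ℤ)+(n:ℤ)-(N:ℤ)+1) x * psiZ ((n:ℤ)+(k:ℤ)-(N:ℤ)+1) x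
        = G n - G (n+1) := by
      intro n
      rw [hGdef]
      have e1 : (n:ℤ)+(k:ℤ)-(N:ℤ) = (k:ℤ)+(n:ℤ)-(N:ℤ) := by ring
      have e2 : (j:ℤ)+(n:ℤ)-(N:ℤ)+1 = (j:ℤ)+((n+1:ℕ):ℤ)-(N:ℤ) := by push_cast; ring
      have e3 : (n:ℤ)+(k:ℤ)-(N:ℤ)+1 = (k:ℤ)+((n+1:ℕ):ℤ)-(N:ℤ) := by push_cast; ring
      rw [e3, e2, e1]
    have key : (∑ n : Fin N,
        (psiZ ((j:ℤ)+(n:ℤ)-(N:ℤ)) x * psiZ ((n:ℤ)+(k:ℤ)-(N:ℤ)) x -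
         psiZ ((j:ℤ)+(n:ℤ)-(N:ℤ)+1) x * psiZ ((n:ℤ)+(k:ℤ)-(N:ℤ)+1) x))
        = -(psiL (j:ℕ) x * psiL (k:ℕ) x) := by
      have h1 : (∑ n : Fin N,
          (psiZ ((j:ℤ)+(n:ℤ)-(N:ℤ)) x * psiZ ((n:ℤ)+(k:ℤ)-(N:ℤ)) x -
           psiZ ((j:ℤ)+(n:ℤ)-(N:ℤ)+1) x * psiZ ((n:ℤ)+(k:ℤ)-(N:ℤ)+1) x))
          = ∑ n ∈ Finset.range N, (G n - G (n+1)) := by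
        rw [← Fin.sum_univ_eq_sum_range (fun m => G m - G (m+1)) N]
        exact Finset.sum_congr rfl (fun n _ => hterm n)
      rw [h1, Finset.sum_range_sub' G N]
      have hG0 : G 0 = 0 := by
        rw [hGdef]
        simp only [Nat.cast_zero]
        rw [psiZ_neg (by omega), zero_mul]
      have hGN : G N = psiL (j:ℕ) x * psiL (k:ℕ) x := by
        rw [hGdef]
        simp only []
        rw [show (j:ℤ)+(N:ℤ)-(N:ℤ) = ((j:ℕ):ℤ) from by push_cast; ring,
            show (k:ℤ)+(N:ℤ)-(N:ℤ) = ((k:ℕ):ℤ) from by push_cast; ring,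
            psiZ_natCast, psiZ_natCast]
      rw [hG0, hGN]
      ring
    rw [key] at h
    exact h
  have htend : Filter.Tendsto F Filter.atTop (nhds 0) := by
    have h := tendsto_finset_sum (Finset.univ : Finset (Fin N))
      (fun (n : Fin N) (_ : n ∈ Finset.univ) =>
      (((tendsto_psiZ ((j:ℤ)+(n:ℤ)-(N:ℤ))).sub (tendsto_psiZ ((j:ℤ)+(n:ℤ)-(N:ℤ)+1))).mul
       ((tendsto_psiZ ((n:ℤ)+(k:ℤ)-(N:ℤ))).sub (tendsto_psiZ ((n:ℤ)+(k:ℤ)-(N:ℤ)+1)))))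
    simpa using h
  have hint := integral_Ioi_of_hasDerivAt_of_tendsto' (a := t0)
      (f := fun t => -F t) (f' := fun x => psiL (j:ℕ) x * psiL (k:ℕ) x) (m := 0)
      (fun x _ => by simpa using (hFderiv x).fun_neg)
      (integrableOn_psiL_mul ht0 (j:ℕ) (k:ℕ))
      (by simpa using htend.neg)
  rw [hLHS, hint]
  ring
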